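/- Let α be irrational with convergent denominators q_n, and for 0 ≤ n < m define r_{n,m}² = (q_m² − q_n²)/(δ_n − δ_m) where δ_k = 4 sin²(π‖q_k α‖). If n ≥ 1 (or n = 0 and α < 1/2) and a_{n+2} ≥ 2, then r_{n,n+1} < r_{n,m} for every m > n+1. -/

import Mathlib

open Real

/-- Iterates of the Gauss map starting at `α`:  `x₀ = α`, `x_{n+1} = frac (1 / xₙ)`. -/
noncomputable def cfX (α : ℝ) : ℕ → ℝ
  | 0 => α
  | n + 1 => Int.fract (1 / cfX α n)

/-- The `n`-th partial quotient `aₙ` (for `n ≥ 1`) of the continued fraction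
`α = [a₁, a₂, …]` of an irrational `α ∈ (0,1)`. -/
noncomputable def cfA (α : ℝ) (n : ℕ) : ℕ := ⌊1 / cfX α (n - 1)⌋₊

/-- Denominators `qₙ` of the rational convergents `pₙ/qₙ` of `α`:
`q₀ = 1`, `q₁ = a₁`, `q_{n+2} = a_{n+2} q_{n+1} + qₙ`. -/
noncomputable def cfQ (α : ℝ) : ℕ → ℕ
  | 0 => 1
  | 1 => cfA α 1
  | n + 2 => cfA α (n + 2) * cfQ α (n + 1) + cfQ α n

/-- Numerators `pₙ` of the rational convergents of `α`. -/
noncomputable def cfP (α : ℝ) : ℕ → ℕ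
  | 0 => 0
  | 1 => 1
  | n + 2 => cfA α (n + 2) * cfP α (n + 1) + cfP α n

/-- Distance from a real number to the nearest integer. -/
noncomputable def intDist (w : ℝ) : ℝ := |w - round w|

/-- `δₙ = 4 sin²(π ‖qₙ α‖)`. -/
noncomputable def cfDelta (α : ℝ) (n : ℕ) : ℝ :=
  4 * Real.sin (π * intDist ((cfQ α n : ℝ) * α)) ^ 2

/-- The crossing radius `r_{n,m} = √((q_m² − q_n²)/(δ_n − δ_m))`. -/
noncomputable def rCross (α : ℝ) (n m : ℕ) : ℝ :=
  Real.sqrt (((cfQ α m : ℝ) ^ 2 - (cfQ α n : ℝ) ^ 2) / (cfDelta α n - cfDelta α m))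

noncomputable def cfE (α : ℝ) (n : ℕ) : ℝ :=
  (-1) ^ n * ((cfQ α n : ℝ) * α - (cfP α n : ℝ))

section aux
variable {α : ℝ} (hirr : Irrational α) (hα : α ∈ Set.Ioo (0:ℝ) 1)
include hirr hα

lemma cfX_prop : ∀ n, Irrational (cfX α n) ∧ 0 < cfX α n ∧ cfX α n < 1 := by
  intro n
  induction n with
  | zero => exact ⟨hirr, hα.1, hα.2⟩
  | succ n ih =>
    obtain ⟨hi, h0, h1⟩ := ih
    have hinv : Irrational (1 / cfX α n) := by rw [one_div]; exact hi.inv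
    have hfr : Irrational (cfX α (n+1)) := by
      show Irrational (Int.fract (1 / cfX α n))
      rw [Int.fract]; exact hinv.sub_intCast _
    refine ⟨hfr, lt_of_le_of_ne (Int.fract_nonneg _) (fun h => hfr.ne_zero h.symm), ?_⟩
    exact Int.fract_lt_one _

lemma one_lt_inv_cfX (n : ℕ) : 1 < 1 / cfX α n := by
  obtain ⟨_, h0, h1⟩ := cfX_prop hirr hα n
  rw [lt_div_iff₀ h0]; linarith

lemma cfA_pos (n : ℕ) : 1 ≤ cfA α (n + 1) := by
  have := one_lt_inv_cfX hirr hα n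
  exact Nat.le_floor (by simpa using this.le)

lemma cfQ_pos : ∀ n, 1 ≤ cfQ α n := by
  have key : ∀ n, 1 ≤ cfQ α n ∧ 1 ≤ cfQ α (n+1) := by
    intro n
    induction n with
    | zero => exact ⟨le_refl _, by simpa [cfQ] using cfA_pos hirr hα 0⟩
    | succ n ih =>
      refine ⟨ih.2, ?_⟩
      show 1 ≤ cfA α (n + 2) * cfQ α (n + 1) + cfQ α n
      have := ih.1; omega
  exact fun n => (key n).1

lemma cfQ_succ_ge (n : ℕ) : cfQ α (n+1) + 1 ≤ cfQ α (n+2) := by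
  show cfQ α (n+1) + 1 ≤ cfA α (n + 2) * cfQ α (n + 1) + cfQ α n
  have h1 := cfA_pos hirr hα (n+1)
  have h2 := cfQ_pos hirr hα n
  have h3 := cfQ_pos hirr hα (n+1)
  nlinarith

lemma cfQ_mono : Monotone (cfQ α) := by
  apply monotone_nat_of_le_succ
  intro n
  match n with
  | 0 => simpa [cfQ] using cfA_pos hirr hα 0
  | (n+1) =>
    show cfQ α (n+1) ≤ cfQ α (n+2)
    have := cfQ_succ_ge hirr hα n; omega

omit hirr hα in
lemma cfE_zero : cfE α 0 = α := by simp [cfE, cfQ, cfP]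

lemma cfA_cast (n : ℕ) : (cfA α (n+1) : ℝ) = (⌊1 / cfX α n⌋ : ℝ) := by
  have h0 : (0:ℝ) ≤ 1 / cfX α n := by
    have := one_lt_inv_cfX hirr hα n; linarith
  show ((⌊1 / cfX α n⌋₊ : ℕ) : ℝ) = _
  rw [← Int.natCast_floor_eq_floor h0]
  push_cast; ring

lemma cfE_succ : ∀ n, cfE α (n+1) = cfX α (n+1) * cfE α n := by
  intro n
  induction n with
  | zero =>
    have hne : α ≠ 0 := ne_of_gt hα.1
    have : cfE α 1 = 1 - (cfA α 1 : ℝ) * α := by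
      simp only [cfE, cfQ, cfP]; push_cast; ring
    rw [this, cfE_zero]
    show _ = Int.fract (1 / cfX α 0) * α
    rw [Int.fract]
    show (1:ℝ) - (cfA α 1 : ℝ) * α = (1 / cfX α 0 - (⌊1 / cfX α 0⌋ : ℝ)) * α
    rw [← cfA_cast hirr hα 0]
    show (1:ℝ) - (cfA α 1 : ℝ) * α = (1 / α - (cfA α 1 : ℝ)) * α
    field_simp
  | succ n ih =>
    have hx := cfX_prop hirr hα (n+1)
    have hxne : cfX α (n+1) ≠ 0 := ne_of_gt hx.2.1
    have hrec : cfE α (n+2) = cfE α n - (cfA α (n+2) : ℝ) * cfE α (n+1) := by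
      have hq : (cfQ α (n+2) : ℝ) = (cfA α (n+2) : ℝ) * cfQ α (n+1) + cfQ α n := by
        show ((cfA α (n + 2) * cfQ α (n + 1) + cfQ α n : ℕ) : ℝ) = _
        push_cast; ring
      have hp : (cfP α (n+2) : ℝ) = (cfA α (n+2) : ℝ) * cfP α (n+1) + cfP α n := by
        show ((cfA α (n + 2) * cfP α (n + 1) + cfP α n : ℕ) : ℝ) = _
        push_cast; ring
      simp only [cfE, hq, hp, pow_succ]
      ring
    rw [hrec, ih]
    show _ = Int.fract (1 / cfX α (n+1)) * (cfX α (n+1) * cfE α n)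
    rw [Int.fract]
    have hA : (cfA α (n+2) : ℝ) = (⌊1 / cfX α (n+1)⌋ : ℝ) := cfA_cast hirr hα (n+1)
    rw [← hA]
    field_simp

lemma cfE_pos : ∀ n, 0 < cfE α n := by
  intro n
  induction n with
  | zero => rw [cfE_zero]; exact hα.1
  | succ n ih =>
    rw [cfE_succ hirr hα n]
    exact mul_pos (cfX_prop hirr hα (n+1)).2.1 ih

lemma cfE_anti : StrictAnti (cfE α) := by
  apply strictAnti_nat_of_succ_lt
  intro n
  rw [cfE_succ hirr hα n]
  have hx := cfX_prop hirr hα (n+1)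
  have he := cfE_pos hirr hα n
  nlinarith [hx.2.1, hx.2.2]

omit hirr hα in
lemma cfDet : ∀ n, (cfP α (n+1) : ℤ) * cfQ α n - (cfP α n : ℤ) * cfQ α (n+1) = (-1)^n := by
  intro n
  induction n with
  | zero => simp [cfP, cfQ]
  | succ n ih =>
    have hq : (cfQ α (n+2) : ℤ) = (cfA α (n+2) : ℤ) * cfQ α (n+1) + cfQ α n := by
      show ((cfA α (n + 2) * cfQ α (n + 1) + cfQ α n : ℕ) : ℤ) = _; push_cast; ring
    have hp : (cfP α (n+2) : ℤ) = (cfA α (n+2) : ℤ) * cfP α (n+1) + cfP α n := by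
      show ((cfA α (n + 2) * cfP α (n + 1) + cfP α n : ℕ) : ℤ) = _; push_cast; ring
    rw [show n+1+1 = n+2 from rfl, hq, hp, pow_succ]
    linear_combination (-1 : ℤ) * ih

omit hirr hα in
lemma cfId (n : ℕ) : (cfQ α (n+1) : ℝ) * cfE α n + (cfQ α n : ℝ) * cfE α (n+1) = 1 := by
  have hd := cfDet (α := α) n
  have hdR : (cfP α (n+1) : ℝ) * cfQ α n - (cfP α n : ℝ) * cfQ α (n+1) = (-1:ℝ)^n := by
    exact_mod_cast congrArg (fun z : ℤ => (z : ℝ)) hd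
  have h1 : ((-1:ℝ)^n)^2 = 1 := by
    rw [← pow_mul, mul_comm, pow_mul]; norm_num
  simp only [cfE, pow_succ]
  linear_combination ((-1:ℝ)^n) * hdR + h1

lemma cfE_lt_half (n : ℕ) (hq : 2 ≤ cfQ α (n+1)) : cfE α n < 1/2 := by
  have hid := cfId (α := α) n
  have h1 := cfE_pos hirr hα (n+1)
  have h2 : (1:ℝ) ≤ (cfQ α n : ℝ) := by exact_mod_cast cfQ_pos hirr hα n
  have h3 : (2:ℝ) ≤ (cfQ α (n+1) : ℝ) := by exact_mod_cast hq
  have h4 := cfE_pos hirr hα n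
  nlinarith

lemma intDist_eq (n : ℕ) (h : cfE α n < 1/2) :
    intDist ((cfQ α n : ℝ) * α) = cfE α n := by
  set d : ℝ := (cfQ α n : ℝ) * α - (cfP α n : ℝ) with hd
  have habs : |d| = cfE α n := by
    have h1 : ((-1:ℝ)^n)^2 = 1 := by rw [← pow_mul, mul_comm, pow_mul]; norm_num
    have : d = (-1)^n * cfE α n := by
      simp only [cfE, hd]
      linear_combination (-(((cfQ α n):ℝ) * α - ((cfP α n):ℝ))) * h1
    rw [this, abs_mul, abs_pow, abs_neg, abs_one, one_pow, one_mul,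
      abs_of_pos (cfE_pos hirr hα n)]
  have hround : round ((cfQ α n : ℝ) * α) = (cfP α n : ℤ) := by
    have hx : (cfQ α n : ℝ) * α = ((cfP α n : ℤ) : ℝ) + d := by push_cast [hd]; ring
    rw [hx, round_intCast_add]
    have h0 : round d = 0 := by
      rw [round_eq_zero_iff]
      constructor
      · have := abs_lt.mp (habs ▸ h : |d| < 1/2); linarith [this.1]
      · have := abs_lt.mp (habs ▸ h : |d| < 1/2); exact this.2
    omega
  rw [intDist, hround]
  push_cast
  exact habs

lemma cfDelta_eq (n : ℕ) (h : cfE α n < 1/2) :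
    cfDelta α n = 4 * Real.sin (π * cfE α n) ^ 2 := by
  rw [cfDelta, intDist_eq hirr hα n h]

omit hirr hα in
lemma cfE_rec (n : ℕ) : cfE α n = (cfA α (n+2) : ℝ) * cfE α (n+1) + cfE α (n+2) := by
  have hq : (cfQ α (n+2) : ℝ) = (cfA α (n+2) : ℝ) * cfQ α (n+1) + cfQ α n := by
    show ((cfA α (n + 2) * cfQ α (n + 1) + cfQ α n : ℕ) : ℝ) = _; push_cast; ring
  have hp : (cfP α (n+2) : ℝ) = (cfA α (n+2) : ℝ) * cfP α (n+1) + cfP α n := by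
    show ((cfA α (n + 2) * cfP α (n + 1) + cfP α n : ℕ) : ℝ) = _; push_cast; ring
  simp only [cfE, hq, hp, pow_succ]
  ring

end aux


lemma delta_pos_aux (e : ℝ) (h0 : 0 < e) (h1 : e < 1/2) : 0 < 4 * Real.sin (π*e)^2 := by
  have hπ := Real.pi_pos
  have hs : 0 < Real.sin (π*e) :=
    Real.sin_pos_of_pos_of_lt_pi (by positivity) (by nlinarith)
  positivity

lemma delta_lt_aux (e f : ℝ) (h0 : 0 < e) (hef : e < f) (hf : f < 1/2) :
    4 * Real.sin (π*e)^2 < 4 * Real.sin (π*f)^2 := by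
  have hπ := Real.pi_pos
  have hs : 0 < Real.sin (π*e) :=
    Real.sin_pos_of_pos_of_lt_pi (by positivity) (by nlinarith)
  have h1 : Real.sin (π*e) < Real.sin (π*f) := by
    apply Real.sin_lt_sin_of_lt_of_le_pi_div_two (by nlinarith) (by nlinarith) (by nlinarith)
  have := pow_lt_pow_left₀ h1 hs.le two_ne_zero
  linarith

lemma delta_double_aux (e f : ℝ) (h0 : 0 < e) (hef : 2*e < f) (hf : f < 1/2) :
    2 * (4 * Real.sin (π*e)^2) < 4 * Real.sin (π*f)^2 := by
  have hπ := Real.pi_pos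
  set t := π*e with ht
  set s := π*f with hs
  have htpos : 0 < t := by positivity
  have htq : t < π/4 := by rw [ht]; nlinarith
  have h2ts : 2*t < s := by rw [ht, hs]; nlinarith
  have hshalf : s < π/2 := by rw [hs]; nlinarith
  have hsinT : 0 < Real.sin t := Real.sin_pos_of_pos_of_lt_pi htpos (by nlinarith)
  have hsin2t_pos : 0 < Real.sin (2*t) :=
    Real.sin_pos_of_pos_of_lt_pi (by linarith) (by nlinarith)
  have hsin2t : Real.sin (2*t) < Real.sin s :=
    Real.sin_lt_sin_of_lt_of_le_pi_div_two (by linarith) (le_of_lt hshalf) h2ts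
  have hcos : Real.cos (π/4) < Real.cos t :=
    Real.cos_lt_cos_of_nonneg_of_le_pi (le_of_lt htpos) (by linarith) htq
  have hcos4 : Real.cos (π/4) = Real.sqrt 2 / 2 := Real.cos_pi_div_four
  have hcossq : (1:ℝ)/2 < Real.cos t ^ 2 := by
    have hc0 : (0:ℝ) ≤ Real.cos (π/4) := by rw [hcos4]; positivity
    have h1 : Real.cos (π/4)^2 < Real.cos t^2 := pow_lt_pow_left₀ hcos hc0 two_ne_zero
    rw [hcos4, div_pow, Real.sq_sqrt (by norm_num : (0:ℝ) ≤ 2)] at h1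
    norm_num at h1
    linarith
  have hA : Real.sin (2*t)^2 < Real.sin s^2 :=
    pow_lt_pow_left₀ hsin2t hsin2t_pos.le two_ne_zero
  have h2t : Real.sin (2*t) = 2 * Real.sin t * Real.cos t := Real.sin_two_mul t
  have hst : 0 < Real.sin t ^ 2 := pow_pos hsinT 2
  have hprod : 0 < Real.sin t ^ 2 * (Real.cos t ^ 2 - 1/2) := mul_pos hst (by linarith)
  have hB : 2 * Real.sin t^2 < Real.sin (2*t)^2 := by rw [h2t]; nlinarith [hprod]
  linarith

lemma sq_pos_aux (x y : ℝ) (h1 : 0 ≤ x) (h2 : x < y) : 0 < y^2 - x^2 := by nlinarith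

lemma sq_four_aux (x y z : ℝ) (h0 : 0 ≤ x) (h1 : x < y) (h2 : 2*y + 1 ≤ z) :
    4*(y^2 - x^2) < z^2 - x^2 := by nlinarith

lemma final_ineq_aux (A Am D1 Dm : ℝ) (hA : 0 < A) (hAm : 4*A < Am) (hD1 : 0 < D1)
    (hDm : 0 < Dm) (hDm2 : Dm < 2*D1) :
    Real.sqrt (A/D1) < Real.sqrt (Am/Dm) := by
  apply Real.sqrt_lt_sqrt (by positivity)
  rw [div_lt_div_iff₀ hD1 hDm]
  nlinarith [mul_pos hA hD1, mul_pos hA hDm]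

set_option maxHeartbeats 1600000 in
/-- If `n ≥ 1` (or `n = 0` and `α < 1/2`) and `a_{n+2} ≥ 2`, then
`r_{n,n+1} < r_{n,m}` for every `m > n + 1`. -/
theorem rCross_min_of_two_le (α : ℝ) (hirr : Irrational α)
    (hα : α ∈ Set.Ioo (0 : ℝ) 1)
    (n : ℕ) (hn : 1 ≤ n ∨ (n = 0 ∧ α < 1 / 2))
    (ha : 2 ≤ cfA α (n + 2)) :
    ∀ m : ℕ, n + 1 < m → rCross α n (n + 1) < rCross α n m := by
  intro m hm
  -- basic q facts
  have hq2 : 2 ≤ cfQ α (n+1) := by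
    rcases hn with hn | ⟨rfl, hhalf⟩
    · obtain ⟨k, rfl⟩ := Nat.exists_eq_add_of_le hn
      have e : 1 + k + 1 = k + 2 := by omega
      rw [e]
      have h1 := cfQ_succ_ge hirr hα k
      have h2 := cfQ_pos hirr hα (k+1)
      omega
    · show 2 ≤ cfQ α 1
      show 2 ≤ cfA α 1
      apply Nat.le_floor
      rw [show cfX α 0 = α from rfl]
      rw [le_div_iff₀ hα.1]
      push_cast
      linarith
  have hqlt : cfQ α n < cfQ α (n+1) := by
    rcases hn with hn | ⟨rfl, _⟩
    · obtain ⟨k, rfl⟩ := Nat.exists_eq_add_of_le hn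
      have e1 : 1 + k = k + 1 := by omega
      have e2 : 1 + k + 1 = k + 2 := by omega
      rw [e1]
      show cfQ α (k + 1) < cfQ α (k + 2)
      have h3 := cfQ_succ_ge hirr hα k
      omega
    · have h0 : cfQ α 0 = 1 := rfl
      rw [h0]
      omega
  -- e facts
  have hen : cfE α n < 1/2 := cfE_lt_half hirr hα n hq2
  have hanti := cfE_anti hirr hα
  have hen1 : cfE α (n+1) < cfE α n := hanti (by omega)
  have hem : cfE α m < cfE α (n+1) := hanti (by omega)
  have hpos := fun k => cfE_pos hirr hα k
  have hrec := cfE_rec (α := α) n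
  have haR : (2:ℝ) ≤ (cfA α (n+2) : ℝ) := by exact_mod_cast ha
  have h2e : 2 * cfE α (n+1) < cfE α n := by
    have hmul : 2 * cfE α (n+1) ≤ (cfA α (n+2) : ℝ) * cfE α (n+1) :=
      mul_le_mul_of_nonneg_right haR (le_of_lt (hpos (n+1)))
    have := hpos (n+2)
    linarith
  -- deltas
  have hδn := cfDelta_eq hirr hα n hen
  have hδn1 := cfDelta_eq hirr hα (n+1) (by linarith)
  have hδm := cfDelta_eq hirr hα m (by linarith)
  have hδ_rel : 2 * cfDelta α (n+1) < cfDelta α n := by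
    rw [hδn, hδn1]
    exact delta_double_aux _ _ (hpos (n+1)) h2e hen
  have hδm_lt : cfDelta α m < cfDelta α n := by
    rw [hδn, hδm]
    exact delta_lt_aux _ _ (hpos m) (by linarith) hen
  have hδm_pos : 0 < cfDelta α m := by
    rw [hδm]; exact delta_pos_aux _ (hpos m) (by linarith)
  have hδn1_lt : cfDelta α (n+1) < cfDelta α n := by
    have h0 : 0 < cfDelta α (n+1) := by
      rw [hδn1]; exact delta_pos_aux _ (hpos (n+1)) (by linarith)
    linarith
  -- q inequalities
  have hqm : 2 * cfQ α (n+1) + 1 ≤ cfQ α m := by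
    have h1 : cfQ α (n+2) ≤ cfQ α m := cfQ_mono hirr hα (by omega)
    have h2 : 2 * cfQ α (n+1) + 1 ≤ cfQ α (n+2) := by
      show 2 * cfQ α (n+1) + 1 ≤ cfA α (n + 2) * cfQ α (n + 1) + cfQ α n
      have h3 := cfQ_pos hirr hα n
      have h4 := Nat.mul_le_mul_right (cfQ α (n+1)) ha
      omega
    omega
  have hqmR : 2 * (cfQ α (n+1) : ℝ) + 1 ≤ (cfQ α m : ℝ) := by exact_mod_cast hqm
  have hqltR : (cfQ α n : ℝ) < (cfQ α (n+1) : ℝ) := by exact_mod_cast hqlt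
  have hqnR : (0:ℝ) ≤ (cfQ α n : ℝ) := by positivity
  have hApos : 0 < (cfQ α (n+1) : ℝ)^2 - (cfQ α n : ℝ)^2 := sq_pos_aux _ _ hqnR hqltR
  have hAm4 : 4*((cfQ α (n+1) : ℝ)^2 - (cfQ α n : ℝ)^2) < (cfQ α m : ℝ)^2 - (cfQ α n : ℝ)^2 :=
    sq_four_aux _ _ _ hqnR hqltR hqmR
  rw [rCross, rCross]
  exact final_ineq_aux _ _ _ _ hApos hAm4 (by linarith) (by linarith) (by linarith)
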